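/- Let ρ be any 2×2 complex matrix and w_ρ(m,α,β) = Tr(ρ · U(m,α,β)) its qubit tomogram. Define the kernel K_y(m,α,β; m',α',β') = (1/2)·δ_{m m'}·(1 − 3 cos α sin β cos α' sin β' + 3 sin α sin β sin α' sin β' − 3 cos β cos β'). Then for all m ∈ {−1/2,1/2} and real α, β: Σ_{m' ∈ {−1/2,1/2}} (1/(2π)) ∫₀^{2π} ∫₀^{π} K_y(m,α,β; m',α',β') · w_ρ(m',α',β') · sin β' dβ' dα' = Tr(σ_y ρ σ_y · U(m,α,β)). -/

import Mathlib

open Matrix Real MeasureTheory intervalIntegral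

noncomputable def sigmaX : Matrix (Fin 2) (Fin 2) ℂ := !![0, 1; 1, 0]
noncomputable def sigmaY : Matrix (Fin 2) (Fin 2) ℂ := !![0, -Complex.I; Complex.I, 0]
noncomputable def sigmaZ : Matrix (Fin 2) (Fin 2) ℂ := !![1, 0; 0, -1]

/-- The qubit de-quantizer U(m, α, β). -/
noncomputable def dequantizer (m α β : ℝ) : Matrix (Fin 2) (Fin 2) ℂ :=
  (1/2 : ℂ) • (1 : Matrix (Fin 2) (Fin 2) ℂ)
    - ((m * Real.cos α * Real.sin β : ℝ) : ℂ) • sigmaX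
    - ((m * Real.sin α * Real.sin β : ℝ) : ℂ) • sigmaY
    + ((m * Real.cos β : ℝ) : ℂ) • sigmaZ

/-- The qubit tomogram of a 2×2 complex matrix ρ. -/
noncomputable def tomogram (ρ : Matrix (Fin 2) (Fin 2) ℂ) (m α β : ℝ) : ℂ :=
  (ρ * dequantizer m α β).trace

/-- The tomographic kernel of the channel ρ ↦ sigmaY ρ sigmaY. -/
noncomputable def kernelY (m α β m' α' β' : ℝ) : ℝ :=
  (1/2) * (if m = m' then (1:ℝ) else 0) *
    (1 - 3 * Real.cos α * Real.sin β * Real.cos α' * Real.sin β'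
      + 3 * Real.sin α * Real.sin β * Real.sin α' * Real.sin β'
      - 3 * Real.cos β * Real.cos β')



lemma inner_helper (a b c d e f : ℝ) :
    (∫ x in (0:ℝ)..π, (a * Real.sin x + b * Real.sin x ^ 2 + c * Real.sin x ^ 3
      + d * (Real.sin x * Real.cos x) + e * (Real.sin x ^ 2 * Real.cos x)
      + f * (Real.sin x * Real.cos x ^ 2)))
    = 2 * a + (π / 2) * b + (4 / 3) * c + (2 / 3) * f := by
  have key : ∀ x ∈ Set.uIcc (0:ℝ) π,
      HasDerivAt (fun y => -(a * Real.cos y) + b / 2 * (y - Real.sin y * Real.cos y)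
        + c * (Real.cos y ^ 3 / 3 - Real.cos y) + d / 2 * Real.sin y ^ 2
        + e / 3 * Real.sin y ^ 3 + (-(f / 3)) * Real.cos y ^ 3)
      (a * Real.sin x + b * Real.sin x ^ 2 + c * Real.sin x ^ 3
        + d * (Real.sin x * Real.cos x) + e * (Real.sin x ^ 2 * Real.cos x)
        + f * (Real.sin x * Real.cos x ^ 2)) x := by
    intro x _
    have hs := Real.hasDerivAt_sin x
    have hc := Real.hasDerivAt_cos x
    have H := ((((((hc.const_mul a).neg).add
        (((hasDerivAt_id x).sub (hs.mul hc)).const_mul (b / 2))).add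
        ((((hc.pow 3).div_const 3).sub hc).const_mul c)).add
        ((hs.pow 2).const_mul (d / 2))).add
        ((hs.pow 3).const_mul (e / 3))).add
        ((hc.pow 3).const_mul (-(f / 3)))
    refine H.congr_deriv ?_
    symm
    have h1 := Real.sin_sq_add_cos_sq x
    norm_num
    linear_combination (b / 2 + c * Real.sin x) * h1
  rw [intervalIntegral.integral_eq_sub_of_hasDerivAt key
    ((Continuous.intervalIntegrable (by continuity) _ _))]
  simp [Real.sin_pi, Real.cos_pi]
  ring

lemma outer_helper (a b c d e f : ℝ) :
    (∫ x in (0:ℝ)..(2 * π), (a + b * Real.cos x + c * Real.sin x + d * Real.cos x ^ 2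
      + e * Real.sin x ^ 2 + f * (Real.sin x * Real.cos x)))
    = (2 * π) * a + π * d + π * e := by
  have key : ∀ x ∈ Set.uIcc (0:ℝ) (2 * π),
      HasDerivAt (fun y => a * y + b * Real.sin y + (-(c)) * Real.cos y
        + d / 2 * (y + Real.sin y * Real.cos y) + e / 2 * (y - Real.sin y * Real.cos y)
        + f / 2 * Real.sin y ^ 2)
      (a + b * Real.cos x + c * Real.sin x + d * Real.cos x ^ 2
        + e * Real.sin x ^ 2 + f * (Real.sin x * Real.cos x)) x := by
    intro x _
    have hs := Real.hasDerivAt_sin x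
    have hc := Real.hasDerivAt_cos x
    have H := ((((((hasDerivAt_id x).const_mul a).add
        (hs.const_mul b)).add (hc.const_mul (-(c)))).add
        (((hasDerivAt_id x).add (hs.mul hc)).const_mul (d / 2))).add
        (((hasDerivAt_id x).sub (hs.mul hc)).const_mul (e / 2))).add
        ((hs.pow 2).const_mul (f / 2))
    refine H.congr_deriv ?_
    symm
    have h1 := Real.sin_sq_add_cos_sq x
    norm_num
    linear_combination ((d + e) / 2) * h1
  rw [intervalIntegral.integral_eq_sub_of_hasDerivAt key
    ((Continuous.intervalIntegrable (by continuity) _ _))]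
  simp [Real.sin_two_pi, Real.cos_two_pi]
  ring


lemma comb_helper (p q r s : ℝ → ℝ) (hp : Continuous p) (hq : Continuous q)
    (hr : Continuous r) (hs : Continuous s) (T X Y Z : ℂ) (lo hi : ℝ) :
    (∫ x in lo..hi, (((p x : ℂ)) * T + ((q x : ℂ)) * X + ((r x : ℂ)) * Y + ((s x : ℂ)) * Z))
    = ((∫ x in lo..hi, p x : ℝ) : ℂ) * T + ((∫ x in lo..hi, q x : ℝ) : ℂ) * X
      + ((∫ x in lo..hi, r x : ℝ) : ℂ) * Y + ((∫ x in lo..hi, s x : ℝ) : ℂ) * Z := by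
  have ip : IntervalIntegrable (fun x => ((p x : ℂ)) * T) volume lo hi :=
    ((Complex.continuous_ofReal.comp hp).mul continuous_const).intervalIntegrable _ _
  have iq : IntervalIntegrable (fun x => ((q x : ℂ)) * X) volume lo hi :=
    ((Complex.continuous_ofReal.comp hq).mul continuous_const).intervalIntegrable _ _
  have ir : IntervalIntegrable (fun x => ((r x : ℂ)) * Y) volume lo hi :=
    ((Complex.continuous_ofReal.comp hr).mul continuous_const).intervalIntegrable _ _
  have is' : IntervalIntegrable (fun x => ((s x : ℂ)) * Z) volume lo hi :=
    ((Complex.continuous_ofReal.comp hs).mul continuous_const).intervalIntegrable _ _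
  rw [intervalIntegral.integral_add ((ip.add iq).add ir) is',
    intervalIntegral.integral_add (ip.add iq) ir,
    intervalIntegral.integral_add ip iq,
    intervalIntegral.integral_mul_const, intervalIntegral.integral_mul_const,
    intervalIntegral.integral_mul_const, intervalIntegral.integral_mul_const,
    intervalIntegral.integral_ofReal, intervalIntegral.integral_ofReal,
    intervalIntegral.integral_ofReal, intervalIntegral.integral_ofReal]

lemma tomogram_eq (ρ : Matrix (Fin 2) (Fin 2) ℂ) (m α β : ℝ) :
    tomogram ρ m α β = (1/2 : ℂ) * (ρ 0 0 + ρ 1 1)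
      - ((m * Real.cos α * Real.sin β : ℝ) : ℂ) * (ρ 0 1 + ρ 1 0)
      - ((m * Real.sin α * Real.sin β : ℝ) : ℂ) * (Complex.I * (ρ 0 1 - ρ 1 0))
      + ((m * Real.cos β : ℝ) : ℂ) * (ρ 0 0 - ρ 1 1) := by
  simp [tomogram, dequantizer, sigmaX, sigmaY, sigmaZ, Matrix.trace_fin_two,
    Matrix.mul_apply, Fin.sum_univ_two, Matrix.one_apply]
  ring

lemma trace_eq (ρ : Matrix (Fin 2) (Fin 2) ℂ) (m α β : ℝ) :
    (sigmaY * ρ * sigmaY * dequantizer m α β).trace = (1/2 : ℂ) * (ρ 0 0 + ρ 1 1)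
      + ((m * Real.cos α * Real.sin β : ℝ) : ℂ) * (ρ 0 1 + ρ 1 0)
      - ((m * Real.sin α * Real.sin β : ℝ) : ℂ) * (Complex.I * (ρ 0 1 - ρ 1 0))
      - ((m * Real.cos β : ℝ) : ℂ) * (ρ 0 0 - ρ 1 1) := by
  simp [dequantizer, sigmaX, sigmaY, sigmaZ, Matrix.trace_fin_two,
    Matrix.mul_apply, Fin.sum_univ_two, Matrix.one_apply, Matrix.vecMul, dotProduct,
    Matrix.vecHead, Matrix.vecTail]
  ring_nf
  simp only [show Complex.I ^ 3 = -Complex.I by rw [pow_succ, Complex.I_sq]; ring, Complex.I_sq]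
  ring

lemma key (ρ : Matrix (Fin 2) (Fin 2) ℂ) (m α β : ℝ) :
    (1 / (2 * (Real.pi : ℂ))) *
      ∫ α' in (0:ℝ)..(2 * Real.pi), ∫ β' in (0:ℝ)..Real.pi,
        (((1/2 * (1 - 3 * Real.cos α * Real.sin β * Real.cos α' * Real.sin β' + 3 * Real.sin α * Real.sin β * Real.sin α' * Real.sin β' - 3 * Real.cos β * Real.cos β') : ℝ) : ℂ) * tomogram ρ m α' β') * ((Real.sin β' : ℝ) : ℂ)
    = (sigmaY * ρ * sigmaY * dequantizer m α β).trace := by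
  have hβ : ∀ α' : ℝ,
      (∫ β' in (0:ℝ)..Real.pi,
        (((1/2 * (1 - 3 * Real.cos α * Real.sin β * Real.cos α' * Real.sin β' + 3 * Real.sin α * Real.sin β * Real.sin α' * Real.sin β' - 3 * Real.cos β * Real.cos β') : ℝ) : ℂ) * tomogram ρ m α' β') * ((Real.sin β' : ℝ) : ℂ))
      = (((1/2) + (-(3 * π / 8) * (Real.cos α * Real.sin β)) * Real.cos α' + ((3 * π / 8) * (Real.sin α * Real.sin β)) * Real.sin α' + 0 * Real.cos α' ^ 2 + 0 * Real.sin α' ^ 2 + 0 * (Real.sin α' * Real.cos α') : ℝ) : ℂ) * (ρ 0 0 + ρ 1 1)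
        + ((0 + (-(π * m / 4)) * Real.cos α' + 0 * Real.sin α' + (2 * m * (Real.cos α * Real.sin β)) * Real.cos α' ^ 2 + 0 * Real.sin α' ^ 2 + (-(2 * m * (Real.sin α * Real.sin β))) * (Real.sin α' * Real.cos α') : ℝ) : ℂ) * (ρ 0 1 + ρ 1 0)
        + ((0 + 0 * Real.cos α' + (-(π * m / 4)) * Real.sin α' + 0 * Real.cos α' ^ 2 + (-(2 * m * (Real.sin α * Real.sin β))) * Real.sin α' ^ 2 + (2 * m * (Real.cos α * Real.sin β)) * (Real.sin α' * Real.cos α') : ℝ) : ℂ) * (Complex.I * (ρ 0 1 - ρ 1 0))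
        + (((-(m * Real.cos β)) + 0 * Real.cos α' + 0 * Real.sin α' + 0 * Real.cos α' ^ 2 + 0 * Real.sin α' ^ 2 + 0 * (Real.sin α' * Real.cos α') : ℝ) : ℂ) * (ρ 0 0 - ρ 1 1) := by
    intro α'
    have hpc : Continuous (fun β' : ℝ => (1/4) * Real.sin β' + ((3/4) * (Real.sin α * Real.sin β * Real.sin α' - Real.cos α * Real.sin β * Real.cos α')) * Real.sin β' ^ 2 + 0 * Real.sin β' ^ 3 + (-(3/4) * Real.cos β) * (Real.sin β' * Real.cos β') + 0 * (Real.sin β' ^ 2 * Real.cos β') + 0 * (Real.sin β' * Real.cos β' ^ 2)) := by fun_prop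
    have hqc : Continuous (fun β' : ℝ => 0 * Real.sin β' + (-(1/2) * m * Real.cos α') * Real.sin β' ^ 2 + (-(3/2) * m * Real.cos α' * (Real.sin α * Real.sin β * Real.sin α' - Real.cos α * Real.sin β * Real.cos α')) * Real.sin β' ^ 3 + 0 * (Real.sin β' * Real.cos β') + ((3/2) * m * Real.cos α' * Real.cos β) * (Real.sin β' ^ 2 * Real.cos β') + 0 * (Real.sin β' * Real.cos β' ^ 2)) := by fun_prop
    have hrc : Continuous (fun β' : ℝ => 0 * Real.sin β' + (-(1/2) * m * Real.sin α') * Real.sin β' ^ 2 + (-(3/2) * m * Real.sin α' * (Real.sin α * Real.sin β * Real.sin α' - Real.cos α * Real.sin β * Real.cos α')) * Real.sin β' ^ 3 + 0 * (Real.sin β' * Real.cos β') + ((3/2) * m * Real.sin α' * Real.cos β) * (Real.sin β' ^ 2 * Real.cos β') + 0 * (Real.sin β' * Real.cos β' ^ 2)) := by fun_prop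
    have hsc : Continuous (fun β' : ℝ => 0 * Real.sin β' + 0 * Real.sin β' ^ 2 + 0 * Real.sin β' ^ 3 + (m/2) * (Real.sin β' * Real.cos β') + ((3/2) * m * (Real.sin α * Real.sin β * Real.sin α' - Real.cos α * Real.sin β * Real.cos α')) * (Real.sin β' ^ 2 * Real.cos β') + (-(3/2) * m * Real.cos β) * (Real.sin β' * Real.cos β' ^ 2)) := by fun_prop
    have hcong : Set.EqOn
        (fun β' : ℝ => (((1/2 * (1 - 3 * Real.cos α * Real.sin β * Real.cos α' * Real.sin β' + 3 * Real.sin α * Real.sin β * Real.sin α' * Real.sin β' - 3 * Real.cos β * Real.cos β') : ℝ) : ℂ) * tomogram ρ m α' β') * ((Real.sin β' : ℝ) : ℂ))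
        (fun β' : ℝ => (((1/4) * Real.sin β' + ((3/4) * (Real.sin α * Real.sin β * Real.sin α' - Real.cos α * Real.sin β * Real.cos α')) * Real.sin β' ^ 2 + 0 * Real.sin β' ^ 3 + (-(3/4) * Real.cos β) * (Real.sin β' * Real.cos β') + 0 * (Real.sin β' ^ 2 * Real.cos β') + 0 * (Real.sin β' * Real.cos β' ^ 2) : ℝ) : ℂ) * (ρ 0 0 + ρ 1 1)
          + ((0 * Real.sin β' + (-(1/2) * m * Real.cos α') * Real.sin β' ^ 2 + (-(3/2) * m * Real.cos α' * (Real.sin α * Real.sin β * Real.sin α' - Real.cos α * Real.sin β * Real.cos α')) * Real.sin β' ^ 3 + 0 * (Real.sin β' * Real.cos β') + ((3/2) * m * Real.cos α' * Real.cos β) * (Real.sin β' ^ 2 * Real.cos β') + 0 * (Real.sin β' * Real.cos β' ^ 2) : ℝ) : ℂ) * (ρ 0 1 + ρ 1 0)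
          + ((0 * Real.sin β' + (-(1/2) * m * Real.sin α') * Real.sin β' ^ 2 + (-(3/2) * m * Real.sin α' * (Real.sin α * Real.sin β * Real.sin α' - Real.cos α * Real.sin β * Real.cos α')) * Real.sin β' ^ 3 + 0 * (Real.sin β' * Real.cos β') + ((3/2) * m * Real.sin α' * Real.cos β) * (Real.sin β' ^ 2 * Real.cos β') + 0 * (Real.sin β' * Real.cos β' ^ 2) : ℝ) : ℂ) * (Complex.I * (ρ 0 1 - ρ 1 0))
          + ((0 * Real.sin β' + 0 * Real.sin β' ^ 2 + 0 * Real.sin β' ^ 3 + (m/2) * (Real.sin β' * Real.cos β') + ((3/2) * m * (Real.sin α * Real.sin β * Real.sin α' - Real.cos α * Real.sin β * Real.cos α')) * (Real.sin β' ^ 2 * Real.cos β') + (-(3/2) * m * Real.cos β) * (Real.sin β' * Real.cos β' ^ 2) : ℝ) : ℂ) * (ρ 0 0 - ρ 1 1))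
        (Set.uIcc (0:ℝ) Real.pi) := by
      intro β' _
      simp only
      rw [tomogram_eq]
      push_cast
      ring
    rw [intervalIntegral.integral_congr hcong,
      comb_helper _ _ _ _ hpc hqc hrc hsc,
      inner_helper, inner_helper, inner_helper, inner_helper]
    push_cast
    ring
  simp only [hβ]
  have hPc : Continuous (fun α' : ℝ => (1/2) + (-(3 * π / 8) * (Real.cos α * Real.sin β)) * Real.cos α' + ((3 * π / 8) * (Real.sin α * Real.sin β)) * Real.sin α' + 0 * Real.cos α' ^ 2 + 0 * Real.sin α' ^ 2 + 0 * (Real.sin α' * Real.cos α')) := by fun_prop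
  have hQc : Continuous (fun α' : ℝ => 0 + (-(π * m / 4)) * Real.cos α' + 0 * Real.sin α' + (2 * m * (Real.cos α * Real.sin β)) * Real.cos α' ^ 2 + 0 * Real.sin α' ^ 2 + (-(2 * m * (Real.sin α * Real.sin β))) * (Real.sin α' * Real.cos α')) := by fun_prop
  have hRc : Continuous (fun α' : ℝ => 0 + 0 * Real.cos α' + (-(π * m / 4)) * Real.sin α' + 0 * Real.cos α' ^ 2 + (-(2 * m * (Real.sin α * Real.sin β))) * Real.sin α' ^ 2 + (2 * m * (Real.cos α * Real.sin β)) * (Real.sin α' * Real.cos α')) := by fun_prop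
  have hSc : Continuous (fun α' : ℝ => (-(m * Real.cos β)) + 0 * Real.cos α' + 0 * Real.sin α' + 0 * Real.cos α' ^ 2 + 0 * Real.sin α' ^ 2 + 0 * (Real.sin α' * Real.cos α')) := by fun_prop
  rw [comb_helper _ _ _ _ hPc hQc hRc hSc,
    outer_helper, outer_helper, outer_helper, outer_helper, trace_eq]
  have hπ : (Real.pi : ℂ) ≠ 0 := by exact_mod_cast Real.pi_ne_zero
  push_cast
  field_simp
  ring

theorem kernelY_represents (ρ : Matrix (Fin 2) (Fin 2) ℂ) :
    ∀ m : ℝ, m = -(1/2) ∨ m = 1/2 → ∀ α β : ℝ,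
      (1 / (2 * (Real.pi : ℂ))) *
        ∫ α' in (0:ℝ)..(2 * Real.pi), ∫ β' in (0:ℝ)..Real.pi,
          ((kernelY m α β (1/2) α' β' : ℂ) * tomogram ρ (1/2) α' β'
            + (kernelY m α β (-(1/2)) α' β' : ℂ) * tomogram ρ (-(1/2)) α' β')
          * (Real.sin β' : ℂ)
      = (sigmaY * ρ * sigmaY * dequantizer m α β).trace := by
  intro m hm α β
  rcases hm with rfl | rfl
  · have hpt : ∀ α' β' : ℝ,
        ((kernelY (-(1/2)) α β (1/2) α' β' : ℂ) * tomogram ρ (1/2) α' β'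
          + (kernelY (-(1/2)) α β (-(1/2)) α' β' : ℂ) * tomogram ρ (-(1/2)) α' β')
          * (Real.sin β' : ℂ)
        = (((1/2 * (1 - 3 * Real.cos α * Real.sin β * Real.cos α' * Real.sin β' + 3 * Real.sin α * Real.sin β * Real.sin α' * Real.sin β' - 3 * Real.cos β * Real.cos β') : ℝ) : ℂ) * tomogram ρ (-(1/2)) α' β') * ((Real.sin β' : ℝ) : ℂ) := by
      intro α' β'
      rw [kernelY, kernelY, if_neg (by norm_num), if_pos rfl]
      push_cast
      ring
    simp only [hpt]
    exact key ρ (-(1/2)) α β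
  · have hpt : ∀ α' β' : ℝ,
        ((kernelY (1/2) α β (1/2) α' β' : ℂ) * tomogram ρ (1/2) α' β'
          + (kernelY (1/2) α β (-(1/2)) α' β' : ℂ) * tomogram ρ (-(1/2)) α' β')
          * (Real.sin β' : ℂ)
        = (((1/2 * (1 - 3 * Real.cos α * Real.sin β * Real.cos α' * Real.sin β' + 3 * Real.sin α * Real.sin β * Real.sin α' * Real.sin β' - 3 * Real.cos β * Real.cos β') : ℝ) : ℂ) * tomogram ρ (1/2) α' β') * ((Real.sin β' : ℝ) : ℂ) := by
      intro α' β'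
      rw [kernelY, kernelY, if_pos rfl, if_neg (by norm_num)]
      push_cast
      ring
    simp only [hpt]
    exact key ρ (1/2) α β
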